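/- If a binary word f has a 2-tilde-error overlap of type SS with adjacent error positions (j = i + 2), then f is tilde-non-isometric. -/

import Mathlib

/-- Edit operations on binary words: `R i` flips the bit at position `i`,
`S i` swaps the (distinct) bits at positions `i` and `i+1`. Positions are 0-based. -/
inductive TOp where
  | R (i : ℕ)
  | S (i : ℕ)
deriving DecidableEq

namespace TOp

def apply : TOp → List Bool → List Bool
  | R i, w => w.set i (!(w.getD i false))
  | S i, w => (w.set i (w.getD (i+1) false)).set (i+1) (w.getD i false)

def valid : TOp → List Bool → Prop
  | R i, w => i < w.length
  | S i, w => i + 1 < w.length ∧ w.getD i false ≠ w.getD (i+1) false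

/-- The set of positions modified by an operation. -/
def positions : TOp → Finset ℕ
  | R i => {i}
  | S i => {i, i+1}

/-- The (leftmost) position of an operation. -/
def pos : TOp → ℕ
  | R i => i
  | S i => i

def isR : TOp → Prop
  | R _ => True
  | S _ => False

def isS : TOp → Prop
  | R _ => False
  | S _ => True

end TOp

/-- All operations of a sequence are valid when applied successively starting from `w`. -/
def validSeq : List TOp → List Bool → Prop
  | [], _ => True
  | o :: os, w => o.valid w ∧ validSeq os (o.apply w)

def applySeq : List TOp → List Bool → List Bool
  | [], w => w
  | o :: os, w => applySeq os (o.apply w)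

/-- `ops` is a tilde-transformation from `u` to `v`. -/
def Transforms (ops : List TOp) (u v : List Bool) : Prop :=
  validSeq ops u ∧ applySeq ops u = v

/-- The swap-mismatch (tilde) distance between two words. -/
noncomputable def tdist (u v : List Bool) : ℕ :=
  sInf { n | ∃ ops : List TOp, ops.length = n ∧ Transforms ops u v }

/-- Each position of the word is modified at most once along the sequence. -/
def eachPosOnce (ops : List TOp) : Prop :=
  ops.Pairwise fun o o' => Disjoint o.positions o'.positions

/-- A minimal tilde-transformation: length `tdist u v`, each position changed at most once. -/
def MinimalTransf (ops : List TOp) (u v : List Bool) : Prop :=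
  Transforms ops u v ∧ ops.length = tdist u v ∧ eachPosOnce ops

/-- The list of all words `w_0 = u, w_1, …, w_h` visited by the transformation. -/
def trajectory (ops : List TOp) (u : List Bool) : List (List Bool) :=
  List.scanl (fun w o => o.apply w) u ops

/-- `w` avoids `f` as a factor. -/
def FFree (f w : List Bool) : Prop := ¬ f <:+: w

/-- All words along the transformation are `f`-free. -/
def FreeTransf (f : List Bool) (ops : List TOp) (u : List Bool) : Prop :=
  ∀ w ∈ trajectory ops u, FFree f w

/-- `f` is tilde-isometric. -/
def TildeIsometric (f : List Bool) : Prop :=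
  ∀ u v : List Bool, u.length = v.length → f.length < u.length →
    FFree f u → FFree f v →
      ∃ ops : List TOp, MinimalTransf ops u v ∧ FreeTransf f ops u

/-- `(u,v)` is a pair of tilde-witnesses for `f`. -/
def Witnesses (f u v : List Bool) : Prop :=
  u.length = v.length ∧ FFree f u ∧ FFree f v ∧ 2 ≤ tdist u v ∧
    ∀ ops : List TOp, MinimalTransf ops u v → ¬ FreeTransf f ops u

/-- Hamming distance between equal-length words (number of mismatch positions). -/
def hdist (u v : List Bool) : ℕ := ((u.zip v).filter fun p => p.1 != p.2).length

section AuxA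
open List

lemma getD_set' (l : List Bool) (a x : ℕ) (b : Bool) :
    (l.set a b).getD x false = if x = a ∧ a < l.length then b else l.getD x false := by
  simp only [List.getD_eq_getElem?_getD, List.getElem?_set]
  by_cases h1 : a = x
  · subst h1
    by_cases h2 : a < l.length <;> simp [h2]
  · simp [h1, Ne.symm h1]

lemma getD_append' (l₁ l₂ : List Bool) (k : ℕ) :
    (l₁ ++ l₂).getD k false =
      if k < l₁.length then l₁.getD k false else l₂.getD (k - l₁.length) false := by
  by_cases h : k < l₁.length
  · simp only [List.getD_eq_getElem?_getD, List.getElem?_append_left h, h, if_true]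
  · simp only [List.getD_eq_getElem?_getD, List.getElem?_append_right (by omega : l₁.length ≤ k), h,
      if_false]

lemma getD_drop' (l : List Bool) (a k : ℕ) :
    (l.drop a).getD k false = l.getD (a + k) false := by
  simp [List.getD_eq_getElem?_getD, List.getElem?_drop]

lemma getD_take' (l : List Bool) (a k : ℕ) (h : k < a) :
    (l.take a).getD k false = l.getD k false := by
  simp [List.getD_eq_getElem?_getD, List.getElem?_take, h]

lemma eq_of_getD {l₁ l₂ : List Bool} (h : l₁.length = l₂.length)
    (h2 : ∀ k, k < l₁.length → l₁.getD k false = l₂.getD k false) : l₁ = l₂ := by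
  apply List.ext_getElem h
  intro i h1 h1'
  have := h2 i h1
  rwa [List.getD_eq_getElem?_getD, List.getD_eq_getElem?_getD,
    List.getElem?_eq_getElem h1, List.getElem?_eq_getElem h1'] at this

lemma length_apply (o : TOp) (w : List Bool) : (o.apply w).length = w.length := by
  cases o <;> simp [TOp.apply]

lemma getD_R (j : ℕ) (w : List Bool) (x : ℕ) :
    ((TOp.R j).apply w).getD x false
      = if x = j ∧ j < w.length then !(w.getD j false) else w.getD x false := by
  show (w.set j (!(w.getD j false))).getD x false = _
  rw [getD_set']

lemma getD_S (j : ℕ) (w : List Bool) (x : ℕ) (hj : j + 1 < w.length) :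
    ((TOp.S j).apply w).getD x false =
      if x = j then w.getD (j+1) false else if x = j+1 then w.getD j false
      else w.getD x false := by
  show ((w.set j (w.getD (j+1) false)).set (j+1) (w.getD j false)).getD x false = _
  rw [getD_set', List.length_set, getD_set']
  have hjlen : j < w.length := by omega
  by_cases h1 : x = j+1
  · simp [h1, hj]
  · by_cases h2 : x = j
    · have : ¬ (x = j + 1 ∧ j + 1 < w.length) := by omega
      simp [this, h2, hjlen]
    · simp [h1, h2]

lemma getD_apply_of_notMem (o : TOp) (w : List Bool) (x : ℕ) (h : x ∉ o.positions) :
    (o.apply w).getD x false = w.getD x false := by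
  cases o with
  | R j =>
      simp only [TOp.positions, Finset.mem_singleton] at h
      rw [getD_R]; simp [h]
  | S j =>
      simp only [TOp.positions, Finset.mem_insert, Finset.mem_singleton] at h
      push_neg at h
      show ((w.set j (w.getD (j+1) false)).set (j+1) (w.getD j false)).getD x false = _
      rw [getD_set', List.length_set, getD_set']
      simp [h.1, h.2]

lemma getD_apply_of_mem (o : TOp) (w : List Bool) (x : ℕ) (hv : o.valid w)
    (h : x ∈ o.positions) : (o.apply w).getD x false ≠ w.getD x false := by
  cases o with
  | R j =>
      simp only [TOp.positions, Finset.mem_singleton] at h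
      subst h
      rw [getD_R]
      simp only [TOp.valid] at hv
      simp [hv]
  | S j =>
      obtain ⟨hlen, hne⟩ := hv
      simp only [TOp.positions, Finset.mem_insert, Finset.mem_singleton] at h
      rcases h with h | h <;> subst h <;> rw [getD_S _ _ _ hlen]
      · rw [if_pos rfl]
        exact fun hh => hne hh.symm
      · have : ¬ (j + 1 = j) := by omega
        rw [if_neg this, if_pos rfl]
        exact hne

end AuxA


lemma tdist_le' {ops : List TOp} {u v : List Bool} (h : Transforms ops u v) :
    tdist u v ≤ ops.length :=
  Nat.sInf_le ⟨ops, rfl, h⟩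

lemma traj_two (o1 o2 : TOp) (u : List Bool) :
    trajectory [o1, o2] u = [u, o1.apply u, o2.apply (o1.apply u)] := by
  simp [trajectory, List.scanl]

lemma diff_positions {o1 o2 : TOp} {u v : List Bool} (h : Transforms [o1, o2] u v)
    (hd : Disjoint o1.positions o2.positions) :
    (∀ x, x ∉ o1.positions → x ∉ o2.positions → v.getD x false = u.getD x false) ∧
      (∀ x ∈ o1.positions, v.getD x false ≠ u.getD x false) ∧
      (∀ x ∈ o2.positions, v.getD x false ≠ u.getD x false) := by
  obtain ⟨⟨hv1, hv2, -⟩, happ⟩ := h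
  simp only [applySeq] at happ
  subst happ
  refine ⟨?_, ?_, ?_⟩
  · intro x h1 h2
    rw [getD_apply_of_notMem _ _ _ h2, getD_apply_of_notMem _ _ _ h1]
  · intro x hx
    have h2 : x ∉ o2.positions := Finset.disjoint_left.mp hd hx
    rw [getD_apply_of_notMem _ _ _ h2]
    exact getD_apply_of_mem _ _ _ hv1 hx
  · intro x hx
    have h1 : x ∉ o1.positions := Finset.disjoint_right.mp hd hx
    have := getD_apply_of_mem _ _ _ hv2 hx
    rwa [getD_apply_of_notMem _ _ _ h1] at this

lemma mem_pos_R (a x : ℕ) : x ∈ (TOp.R a).positions ↔ x = a := by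
  simp [TOp.positions]

lemma mem_pos_S (a x : ℕ) : x ∈ (TOp.S a).positions ↔ x = a ∨ x = a + 1 := by
  simp [TOp.positions]

lemma once_two {o1 o2 : TOp} (h : eachPosOnce [o1, o2]) :
    Disjoint o1.positions o2.positions := by
  simp only [eachPosOnce, List.pairwise_cons] at h
  exact h.1 o2 (by simp)

/-- Double flip at the same position is the identity. -/
lemma R_R (c : ℕ) (w : List Bool) :
    (TOp.R c).apply ((TOp.R c).apply w) = w := by
  apply eq_of_getD (by rw [length_apply, length_apply])
  intro k hk
  rw [length_apply, length_apply] at hk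
  rw [getD_R, getD_R, getD_R]
  rw [length_apply]
  by_cases h : k = c ∧ c < w.length
  · simp [h, h.1, h.2]
  · simp only [h, if_false]

/-- Double swap at the same position is the identity. -/
lemma S_S (c : ℕ) (w : List Bool) (hc : c + 1 < w.length) :
    (TOp.S c).apply ((TOp.S c).apply w) = w := by
  have hc' : c + 1 < ((TOp.S c).apply w).length := by rw [length_apply]; exact hc
  apply eq_of_getD (by rw [length_apply, length_apply])
  intro k hk
  rw [getD_S _ _ _ hc', getD_S _ _ _ hc, getD_S _ _ _ hc, getD_S _ _ _ hc]
  by_cases h1 : k = c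
  · simp [h1]
  · by_cases h2 : k = c + 1 <;> simp [h1, h2]

/-- Flipping both positions of a pair of distinct bits is the same as swapping them. -/
lemma RR_eq_S (c : ℕ) (w : List Bool) (hc : c + 1 < w.length)
    (hne : w.getD c false = !(w.getD (c+1) false)) :
    (TOp.R (c+1)).apply ((TOp.R c).apply w) = (TOp.S c).apply w := by
  apply eq_of_getD (by rw [length_apply, length_apply, length_apply])
  intro k hk
  rw [length_apply, length_apply] at hk
  rw [getD_R, getD_R, getD_R, getD_S _ _ _ hc, length_apply]
  have hc0 : c < w.length := by omega
  by_cases h1 : k = c + 1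
  · subst h1
    rw [if_pos (And.intro rfl hc), if_neg (by omega : ¬ (c + 1 = c ∧ c < w.length)),
      if_neg (by omega : ¬ c + 1 = c), if_pos rfl, hne]
  · by_cases h2 : k = c
    · subst h2
      rw [if_neg (by omega : ¬ (k = k + 1 ∧ k + 1 < w.length)),
        if_pos (And.intro rfl hc0), if_pos rfl, hne]
      simp
    · rw [if_neg (by simp [h1] : ¬ (k = c + 1 ∧ c + 1 < w.length)),
        if_neg (by simp [h2] : ¬ (k = c ∧ c < w.length)), if_neg h2, if_neg h1]

lemma caseR (f w : List Bool) (c : ℕ) (hc : c + 1 < w.length) (hlen : f.length < w.length)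
    (hne : w.getD c false = !(w.getD (c+1) false))
    (hwf : f <:+: w) (hxf : f <:+: (TOp.S c).apply w)
    (h0 : FFree f ((TOp.R c).apply w)) (h1 : FFree f ((TOp.R (c+1)).apply w))
    (hIso : TildeIsometric f) : False := by
  set u := (TOp.R c).apply w with hu_def
  set v := (TOp.R (c+1)).apply w with hv_def
  have hulen : u.length = w.length := length_apply _ _
  have hvlen : v.length = w.length := length_apply _ _
  have hcw : c < w.length := by omega
  -- getD values
  have hu : ∀ x, u.getD x false = if x = c then !(w.getD c false) else w.getD x false := by
    intro x
    rw [hu_def, getD_R]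
    by_cases h : x = c
    · simp [h, hcw]
    · simp [h]
  have hv : ∀ x, v.getD x false = if x = c + 1 then !(w.getD (c+1) false) else w.getD x false := by
    intro x
    rw [hv_def, getD_R]
    by_cases h : x = c + 1
    · simp [h, hc]
    · simp [h]
  have d1 : u.getD c false ≠ v.getD c false := by
    rw [hu c, hv c, if_pos rfl, if_neg (by omega : ¬ c = c + 1)]
    simp
  have d2 : u.getD (c+1) false ≠ v.getD (c+1) false := by
    rw [hu (c+1), hv (c+1), if_pos rfl, if_neg (by omega : ¬ c + 1 = c)]
    simp
  have huu : u.getD c false = u.getD (c+1) false := by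
    rw [hu c, hu (c+1), if_pos rfl, if_neg (by omega : ¬ c + 1 = c), hne]
    simp
  -- invoke isometricity
  obtain ⟨ops, ⟨htr, hlen2, honce⟩, hfree⟩ :=
    hIso u v (by rw [hulen, hvlen]) (by rw [hulen]; exact hlen) h0 h1
  -- a transformation of length 2
  have hRu : (TOp.R c).apply u = w := R_R c w
  have h2 : Transforms [TOp.R c, TOp.R (c+1)] u v := by
    constructor
    · refine ⟨?_, ?_, trivial⟩
      · show c < u.length
        omega
      · show c + 1 < ((TOp.R c).apply u).length
        rw [length_apply]; omega
    · show (TOp.R (c+1)).apply ((TOp.R c).apply u) = v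
      rw [hRu]
  have hle : ops.length ≤ 2 := by rw [hlen2]; exact tdist_le' h2
  match ops, htr, honce, hfree with
  | [], htr, _, _ =>
      exact d1 (by rw [← htr.2]; rfl)
  | [o1], htr, _, _ =>
      obtain ⟨⟨hv1, -⟩, happ⟩ := htr
      simp only [applySeq] at happ
      have hcpos : c ∈ o1.positions := by
        by_contra hh
        have := getD_apply_of_notMem o1 u c hh
        rw [happ] at this
        exact d1 this.symm
      have hcpos1 : c + 1 ∈ o1.positions := by
        by_contra hh
        have := getD_apply_of_notMem o1 u (c+1) hh
        rw [happ] at this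
        exact d2 this.symm
      cases o1 with
      | R j =>
          rw [mem_pos_R] at hcpos hcpos1
          omega
      | S j =>
          rw [mem_pos_S] at hcpos hcpos1
          have hj : j = c := by omega
          subst hj
          exact hv1.2 huu
  | [o1, o2], htr, honce, hfree =>
      have hdisj := once_two honce
      obtain ⟨hout, hm1, hm2⟩ := diff_positions htr hdisj
      have hsub : ∀ x, (x ∈ o1.positions ∨ x ∈ o2.positions) → x = c ∨ x = c + 1 := by
        intro x hx
        by_contra hh
        push_neg at hh
        have heq : u.getD x false = v.getD x false := by
          rw [hu x, hv x, if_neg hh.1, if_neg hh.2]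
        rcases hx with hx | hx
        · exact hm1 x hx heq.symm
        · exact hm2 x hx heq.symm
      have hc1 : c ∈ o1.positions ∨ c ∈ o2.positions := by
        by_contra hh
        push_neg at hh
        exact d1 (hout c hh.1 hh.2).symm
      have hc2 : c + 1 ∈ o1.positions ∨ c + 1 ∈ o2.positions := by
        by_contra hh
        push_neg at hh
        exact d2 (hout (c+1) hh.1 hh.2).symm
      -- neither op can be a swap
      have hnotS : ∀ a, o1 ≠ TOp.S a ∧ o2 ≠ TOp.S a := by
        intro a
        constructor
        · rintro rfl
          have ha1 := hsub a (Or.inl ((mem_pos_S a a).mpr (Or.inl rfl)))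
          have ha2 := hsub (a+1) (Or.inl ((mem_pos_S a (a+1)).mpr (Or.inr rfl)))
          obtain ⟨b, hb⟩ : ∃ b, b ∈ o2.positions := by
            cases o2 with
            | R b => exact ⟨b, (mem_pos_R b b).mpr rfl⟩
            | S b => exact ⟨b, (mem_pos_S b b).mpr (Or.inl rfl)⟩
          have hbc := hsub b (Or.inr hb)
          have hnot := Finset.disjoint_right.mp hdisj hb
          rw [mem_pos_S] at hnot
          omega
        · rintro rfl
          have ha1 := hsub a (Or.inr ((mem_pos_S a a).mpr (Or.inl rfl)))
          have ha2 := hsub (a+1) (Or.inr ((mem_pos_S a (a+1)).mpr (Or.inr rfl)))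
          obtain ⟨b, hb⟩ : ∃ b, b ∈ o1.positions := by
            cases o1 with
            | R b => exact ⟨b, (mem_pos_R b b).mpr rfl⟩
            | S b => exact ⟨b, (mem_pos_S b b).mpr (Or.inl rfl)⟩
          have hbc := hsub b (Or.inl hb)
          have hnot := Finset.disjoint_left.mp hdisj hb
          rw [mem_pos_S] at hnot
          omega
      -- both are flips
      obtain ⟨a, ha⟩ : ∃ a, o1 = TOp.R a := by
        cases o1 with
        | R a => exact ⟨a, rfl⟩
        | S a => exact absurd rfl (hnotS a).1
      obtain ⟨b, hb⟩ : ∃ b, o2 = TOp.R b := by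
        cases o2 with
        | R b => exact ⟨b, rfl⟩
        | S b => exact absurd rfl (hnotS b).2
      subst ha hb
      have hab : (a = c ∧ b = c + 1) ∨ (a = c + 1 ∧ b = c) := by
        have h1 := hsub a (Or.inl ((mem_pos_R a a).mpr rfl))
        have h2 := hsub b (Or.inr ((mem_pos_R b b).mpr rfl))
        have h3 : a ≠ b := by
          intro hh
          have hmem := Finset.disjoint_left.mp hdisj ((mem_pos_R a a).mpr rfl)
          rw [mem_pos_R] at hmem
          exact hmem hh
        rw [mem_pos_R, mem_pos_R] at hc1 hc2
        omega
      have hmem2 : (TOp.R a).apply u ∈ trajectory [TOp.R a, TOp.R b] u := by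
        rw [traj_two]; simp
      rcases hab with ⟨ha, hb⟩ | ⟨ha, hb⟩
      · have heq : (TOp.R a).apply u = w := by rw [ha]; exact hRu
        exact hfree _ hmem2 (heq ▸ hwf)
      · have heq : (TOp.R a).apply u = (TOp.S c).apply w := by
          rw [ha, hu_def]; exact RR_eq_S c w hc hne
        exact hfree _ hmem2 (heq ▸ hxf)
  | o1 :: o2 :: o3 :: rest, _, _, _ =>
      simp at hle

lemma caseS (f w : List Bool) (c : ℕ) (hc : c + 3 < w.length) (hlen : f.length < w.length)
    (h01 : w.getD c false = !(w.getD (c+1) false))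
    (h23 : w.getD (c+2) false = !(w.getD (c+3) false))
    (hwf : f <:+: w) (hw2f : f <:+: (TOp.S (c+2)).apply ((TOp.S c).apply w))
    (hx : FFree f ((TOp.S c).apply w)) (hy : FFree f ((TOp.S (c+2)).apply w))
    (hIso : TildeIsometric f) : False := by
  have hc1 : c + 1 < w.length := by omega
  have hc3 : c + 3 < w.length := hc
  have hc2 : c + 2 + 1 < w.length := by omega
  set x := (TOp.S c).apply w with hx_def
  set y := (TOp.S (c+2)).apply w with hy_def
  have hxlen : x.length = w.length := length_apply _ _
  have hylen : y.length = w.length := length_apply _ _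
  have hxv : ∀ z, x.getD z false =
      if z = c then w.getD (c+1) false else if z = c+1 then w.getD c false
      else w.getD z false := fun z => by rw [hx_def, getD_S _ _ _ hc1]
  have hyv : ∀ z, y.getD z false =
      if z = c+2 then w.getD (c+3) false else if z = c+3 then w.getD (c+2) false
      else w.getD z false := fun z => by rw [hy_def, getD_S _ _ _ hc2]
  have d0 : x.getD c false ≠ y.getD c false := by
    rw [hxv c, hyv c, if_pos rfl, if_neg (by omega : ¬ c = c+2),
      if_neg (by omega : ¬ c = c+3), h01]
    simp
  have d1 : x.getD (c+1) false ≠ y.getD (c+1) false := by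
    rw [hxv (c+1), hyv (c+1), if_neg (by omega : ¬ c+1 = c), if_pos rfl,
      if_neg (by omega : ¬ c+1 = c+2), if_neg (by omega : ¬ c+1 = c+3), h01]
    simp
  have d2 : x.getD (c+2) false ≠ y.getD (c+2) false := by
    rw [hxv (c+2), hyv (c+2), if_neg (by omega : ¬ c+2 = c),
      if_neg (by omega : ¬ c+2 = c+1), if_pos rfl, h23]
    simp
  have d3 : x.getD (c+3) false ≠ y.getD (c+3) false := by
    rw [hxv (c+3), hyv (c+3), if_neg (by omega : ¬ c+3 = c),
      if_neg (by omega : ¬ c+3 = c+1), if_neg (by omega : ¬ c+3 = c+2), if_pos rfl, h23]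
    simp
  have dout : ∀ z, z ≠ c → z ≠ c+1 → z ≠ c+2 → z ≠ c+3 →
      x.getD z false = y.getD z false := by
    intro z hz0 hz1 hz2 hz3
    rw [hxv z, hyv z, if_neg hz0, if_neg hz1, if_neg hz2, if_neg hz3]
  obtain ⟨ops, ⟨htr, hlen2, honce⟩, hfree⟩ :=
    hIso x y (by rw [hxlen, hylen]) (by rw [hxlen]; exact hlen) hx hy
  have hSx : (TOp.S c).apply x = w := S_S c w hc1
  have h2 : Transforms [TOp.S c, TOp.S (c+2)] x y := by
    refine ⟨⟨⟨?_, ?_⟩, ?_⟩, ?_⟩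
    · rw [hxlen]; omega
    · rw [hxv c, hxv (c+1), if_pos rfl, if_neg (by omega : ¬ c+1 = c), if_pos rfl, h01]
      simp
    · rw [hSx]
      refine ⟨⟨by omega, ?_⟩, trivial⟩
      rw [h23]
      simp
    · show (TOp.S (c+2)).apply ((TOp.S c).apply x) = y
      rw [hSx, hy_def]
  have hle : ops.length ≤ 2 := by rw [hlen2]; exact tdist_le' h2
  match ops, htr, honce, hfree with
  | [], htr, _, _ =>
      exact d0 (by rw [← htr.2]; rfl)
  | [o1], htr, _, _ =>
      obtain ⟨⟨hv1, -⟩, happ⟩ := htr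
      simp only [applySeq] at happ
      have hp0 : c ∈ o1.positions := by
        by_contra hh
        have := getD_apply_of_notMem o1 x c hh
        rw [happ] at this
        exact d0 this.symm
      have hp3 : c + 3 ∈ o1.positions := by
        by_contra hh
        have := getD_apply_of_notMem o1 x (c+3) hh
        rw [happ] at this
        exact d3 this.symm
      cases o1 with
      | R j => rw [mem_pos_R] at hp0 hp3; omega
      | S j => rw [mem_pos_S] at hp0 hp3; omega
  | [o1, o2], htr, honce, hfree =>
      have hdisj := once_two honce
      obtain ⟨hout, hm1, hm2⟩ := diff_positions htr hdisj
      have hsub : ∀ z, (z ∈ o1.positions ∨ z ∈ o2.positions) →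
          z = c ∨ z = c + 1 ∨ z = c + 2 ∨ z = c + 3 := by
        intro z hz
        by_contra hh
        push_neg at hh
        have heq : x.getD z false = y.getD z false :=
          dout z hh.1 hh.2.1 hh.2.2.1 hh.2.2.2
        rcases hz with hz | hz
        · exact hm1 z hz heq.symm
        · exact hm2 z hz heq.symm
      have hin : ∀ z ∈ ({c, c+1, c+2, c+3} : Finset ℕ),
          z ∈ o1.positions ∨ z ∈ o2.positions := by
        intro z hz
        by_contra hh
        push_neg at hh
        have heq := hout z hh.1 hh.2
        simp only [Finset.mem_insert, Finset.mem_singleton] at hz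
        rcases hz with rfl | rfl | rfl | rfl
        · exact d0 heq.symm
        · exact d1 heq.symm
        · exact d2 heq.symm
        · exact d3 heq.symm
      have hq0 := hin c (by simp)
      have hq1 := hin (c+1) (by simp)
      have hq2 := hin (c+2) (by simp)
      have hq3 := hin (c+3) (by simp)
      have hnotR : ∀ a, o1 ≠ TOp.R a ∧ o2 ≠ TOp.R a := by
        intro a
        constructor
        · rintro rfl
          cases o2 with
          | R b =>
              rw [mem_pos_R, mem_pos_R] at hq0 hq1 hq2
              omega
          | S b =>
              rw [mem_pos_R, mem_pos_S] at hq0 hq1 hq2 hq3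
              omega
        · rintro rfl
          cases o1 with
          | R b =>
              rw [mem_pos_R, mem_pos_R] at hq0 hq1 hq2
              omega
          | S b =>
              rw [mem_pos_S, mem_pos_R] at hq0 hq1 hq2 hq3
              omega
      obtain ⟨a, ha⟩ : ∃ a, o1 = TOp.S a := by
        cases o1 with
        | R a => exact absurd rfl (hnotR a).1
        | S a => exact ⟨a, rfl⟩
      obtain ⟨b, hb⟩ : ∃ b, o2 = TOp.S b := by
        cases o2 with
        | R b => exact absurd rfl (hnotR b).2
        | S b => exact ⟨b, rfl⟩
      subst ha hb
      have hab : (a = c ∧ b = c + 2) ∨ (a = c + 2 ∧ b = c) := by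
        have g1 := hsub a (Or.inl ((mem_pos_S a a).mpr (Or.inl rfl)))
        have g2 := hsub (a+1) (Or.inl ((mem_pos_S a (a+1)).mpr (Or.inr rfl)))
        have g3 := hsub b (Or.inr ((mem_pos_S b b).mpr (Or.inl rfl)))
        have g4 := hsub (b+1) (Or.inr ((mem_pos_S b (b+1)).mpr (Or.inr rfl)))
        have g5 := Finset.disjoint_left.mp hdisj ((mem_pos_S a a).mpr (Or.inl rfl))
        have g6 := Finset.disjoint_left.mp hdisj ((mem_pos_S a (a+1)).mpr (Or.inr rfl))
        rw [mem_pos_S] at g5 g6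
        rw [mem_pos_S, mem_pos_S] at hq0 hq1 hq2 hq3
        omega
      have hmem2 : (TOp.S a).apply x ∈ trajectory [TOp.S a, TOp.S b] x := by
        rw [traj_two]; simp
      rcases hab with ⟨ha, hb⟩ | ⟨ha, hb⟩
      · have heq : (TOp.S a).apply x = w := by rw [ha]; exact hSx
        exact hfree _ hmem2 (heq ▸ hwf)
      · have heq : (TOp.S a).apply x = (TOp.S (c+2)).apply ((TOp.S c).apply w) := by
          rw [ha, hx_def]
        exact hfree _ hmem2 (heq ▸ hw2f)
  | o1 :: o2 :: o3 :: rest, _, _, _ =>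
      simp at hle

section Core
open scoped Classical

private lemma chain_aux (F : ℕ → Bool) (t c nn : ℕ) (ht : 1 ≤ t)
    (hA : ∀ x, x + t < nn → F (x + t) = if x + t = c then !(F x) else F x) :
    ∀ d a, a + t * d < nn →
      F (a + t * d) = if (∃ j, 1 ≤ j ∧ j ≤ d ∧ a + t * j = c) then !(F a) else F a := by
  intro d
  induction d with
  | zero =>
      intro a ha
      have hno : ¬ ∃ j, 1 ≤ j ∧ j ≤ 0 ∧ a + t * j = c := by
        rintro ⟨j, hj1, hj2, -⟩; omega
      simp only [Nat.mul_zero, Nat.add_zero]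
      rw [if_neg hno]
  | succ d ih =>
      intro a ha
      have hstep : a + t * (d + 1) = (a + t * d) + t := by ring
      have hlt : a + t * d + t < nn := by omega
      have hx := hA (a + t * d) hlt
      have hprev := ih a (by omega)
      rw [hstep, hx]
      by_cases hnew : a + t * d + t = c
      · have hold : ¬ ∃ j, 1 ≤ j ∧ j ≤ d ∧ a + t * j = c := by
          rintro ⟨j, hj1, hj2, hj3⟩
          have h1 : t * j + t ≤ t * d + t := by
            have := Nat.mul_le_mul_left t hj2
            omega
          omega
        have hcond : ∃ j, 1 ≤ j ∧ j ≤ d + 1 ∧ a + t * j = c := by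
          exact ⟨d + 1, by omega, le_refl _, by rw [hstep]; exact hnew⟩
        rw [if_pos hnew, hprev, if_neg hold, if_pos hcond]
      · rw [if_neg hnew, hprev]
        by_cases hold : ∃ j, 1 ≤ j ∧ j ≤ d ∧ a + t * j = c
        · have hcond : ∃ j, 1 ≤ j ∧ j ≤ d + 1 ∧ a + t * j = c := by
            obtain ⟨j, h1, h2, h3⟩ := hold
            exact ⟨j, h1, by omega, h3⟩
          rw [if_pos hold, if_pos hcond]
        · have hcond : ¬ ∃ j, 1 ≤ j ∧ j ≤ d + 1 ∧ a + t * j = c := by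
            rintro ⟨j, h1, h2, h3⟩
            rcases Nat.lt_or_ge j (d+1) with hj | hj
            · exact hold ⟨j, h1, by omega, h3⟩
            · have : j = d + 1 := by omega
              subst this
              rw [← hstep] at hnew
              have : t * (d+1) = t * d + t := by ring
              omega
          rw [if_neg hold, if_neg hcond]

lemma chain2 (F : ℕ → Bool) (t c nn : ℕ) (ht : 1 ≤ t)
    (hA : ∀ x, x + t < nn → F (x + t) = if x + t = c then !(F x) else F x)
    (a b : ℕ) (hab : a ≤ b) (hb : b < nn) (hd : ∃ d, b - a = t * d) :
    F b = if (a < c ∧ c ≤ b ∧ ∃ e, c - a = t * e) then !(F a) else F a := by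
  obtain ⟨d, hdd⟩ := hd
  have hb' : b = a + t * d := by omega
  subst hb'
  rw [chain_aux F t c nn ht hA d a hb]
  congr 1
  apply propext
  constructor
  · rintro ⟨j, h1, h2, h3⟩
    have hj1 : t * 1 ≤ t * j := Nat.mul_le_mul_left t h1
    have hj2 : t * j ≤ t * d := Nat.mul_le_mul_left t h2
    exact ⟨by omega, by omega, j, by omega⟩
  · rintro ⟨h1, h2, e, h3⟩
    refine ⟨e, ?_, ?_, by omega⟩
    · have : 1 ≤ t * e := by omega
      by_contra hh
      have : e = 0 := by omega
      subst this
      omega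
    · by_contra hh
      have : d + 1 ≤ e := by omega
      have : t * (d+1) ≤ t * e := Nat.mul_le_mul_left t this
      have ht2 : t * (d+1) = t * d + t := by ring
      omega

end Core

section LS
open scoped Classical

lemma LS (f : List Bool) (r i δ m : ℕ) (hδ : δ ≤ 3) (hm4 : i + 4 ≤ m) (hr : 1 ≤ r)
    (hn : f.length = m + r)
    (hX1 : f.getD (i+1) false = !(f.getD i false))
    (hX2 : f.getD (i+3) false = !(f.getD (i+2) false))
    (hO : ∀ k, k < m → f.getD (k + r) false =
        if i ≤ k ∧ k < i + 4 then !(f.getD k false) else f.getD k false) :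
    FFree f ((TOp.R (r + i + δ)).apply (f ++ f.drop m)) := by
  set F : ℕ → Bool := fun x => f.getD x false with hF_def
  set c : ℕ := r + i + δ with hc_def
  set w : List Bool := f ++ f.drop m with hw_def
  have hdroplen : (f.drop m).length = r := by rw [List.length_drop, hn]; omega
  have hwlen : w.length = f.length + r := by rw [hw_def, List.length_append, hdroplen]
  have hcn : c < f.length := by omega
  have hW1 : ∀ z, z < f.length → w.getD z false = F z := by
    intro z hz
    rw [hw_def, getD_append', if_pos hz]
  have hW2 : ∀ z, f.length ≤ z → z < f.length + r → w.getD z false = F (z - r) := by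
    intro z hz1 hz2
    rw [hw_def, getD_append', if_neg (by omega), getD_drop']
    show f.getD (m + (z - f.length)) false = F (z - r)
    have : m + (z - f.length) = z - r := by omega
    rw [this]
  intro hocc
  obtain ⟨s1, s2, heq⟩ := hocc
  set t : ℕ := s1.length with ht_def
  have hulen : ((TOp.R c).apply w).length = w.length := length_apply _ _
  have htr : t + f.length ≤ w.length := by
    have := congrArg List.length heq
    simp only [List.length_append, hulen] at this
    omega
  have htr' : t ≤ r := by omega
  have hcw : c < w.length := by omega
  have hU : ∀ z, ((TOp.R c).apply w).getD z false =
      if z = c then !(w.getD c false) else w.getD z false := by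
    intro z
    rw [getD_R]
    by_cases h : z = c
    · rw [if_pos ⟨h, hcw⟩, if_pos h]
    · rw [if_neg (fun hh => h hh.1), if_neg h]
  have hFX1 : F (i+1) = !(F i) := hX1
  have hFX2 : F (i+3) = !(F (i+2)) := hX2
  have hFO : ∀ k, k < m → F (k + r) =
      if i ≤ k ∧ k < i + 4 then !(F k) else F k := hO
  have hpt : ∀ k, k < f.length → F k = if t + k = c then !(F c) else w.getD (t + k) false := by
    intro k hk
    have hl1 : (s1 ++ f).length = t + f.length := by
      rw [List.length_append, ht_def]
    have h1 : ((TOp.R c).apply w).getD (t + k) false = f.getD k false := by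
      rw [← heq, getD_append', if_pos (by omega), getD_append', if_neg (by omega)]
      have hik : t + k - s1.length = k := by omega
      rw [hik]
    show f.getD k false = _
    rw [← h1, hU (t + k)]
    by_cases h : t + k = c
    · rw [if_pos h, if_pos h, hW1 c hcn]
    · rw [if_neg h, if_neg h]
  -- case t = 0
  rcases Nat.eq_zero_or_pos t with ht0 | htpos
  · have := hpt c hcn
    rw [ht0] at this
    simp only [Nat.zero_add, if_pos rfl] at this
    rcases Bool.eq_false_or_eq_true (F c) with h | h <;> rw [h] at this <;> simp at this
  rcases Nat.lt_or_ge t r with htlt | htge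
  swap
  · -- case t = r
    have htr2 : t = r := by omega
    set δ' : ℕ := if δ = 0 then 1 else 0 with hδ'_def
    have hδ'3 : δ' ≤ 3 ∧ δ' ≠ δ := by
      rw [hδ'_def]; by_cases h : δ = 0 <;> simp [h] <;> omega
    have hk : i + δ' < m := by omega
    have h1 := hpt (i + δ') (by omega)
    have h2 : ¬ (t + (i + δ') = c) := by rw [htr2, hc_def]; omega
    rw [if_neg h2] at h1
    have h3 : w.getD (t + (i + δ')) false = F (t + (i + δ')) := hW1 _ (by omega)
    rw [h3] at h1
    have h4 : t + (i + δ') = (i + δ') + r := by omega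
    rw [h4] at h1
    have h5 := hFO (i + δ') hk
    rw [if_pos (by omega)] at h5
    rw [h5] at h1
    rcases Bool.eq_false_or_eq_true (F (i + δ')) with h | h <;>
      rw [h] at h1 <;> simp at h1
  -- main case 0 < t < r
  set q : ℕ := r - t with hq_def
  have hq1 : 1 ≤ q := by omega
  have hA : ∀ x, x + t < f.length → F (x + t) = if x + t = c then !(F x) else F x := by
    intro x hx
    have h1 := hpt x (by omega)
    have h2 : t + x = x + t := by omega
    rw [h2] at h1
    by_cases h : x + t = c
    · rw [if_pos h] at h1
      rw [if_pos h, h]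
      rcases Bool.eq_false_or_eq_true (F c) with hb | hb <;> rw [hb] at h1 <;>
        simp at h1 <;> rw [hb, h1] <;> rfl
    · rw [if_neg h] at h1
      rw [if_neg h, h1, hW1 (x + t) hx]
  have hB : ∀ j, m ≤ j → j < m + t → F (j + q) = F j := by
    intro j hj1 hj2
    have h1 := hpt (j + q) (by omega)
    have h2 : ¬ (t + (j + q) = c) := by omega
    rw [if_neg h2] at h1
    have h3 : w.getD (t + (j + q)) false = F (t + (j + q) - r) := by
      apply hW2 _ (by omega) (by omega)
    rw [h3] at h1
    have h4 : t + (j + q) - r = j := by omega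
    rw [h4] at h1
    exact h1
  -- case t = 1
  rcases Nat.lt_or_ge t 2 with ht1 | ht2
  · have ht1' : t = 1 := by omega
    have h1 := hA i (by omega)
    rw [if_neg (by omega), ht1'] at h1
    rw [h1] at hFX1
    rcases Bool.eq_false_or_eq_true (F i) with h | h <;> rw [h] at hFX1 <;> simp at hFX1
  -- MASTER instances
  have hmaster : ∀ k, i ≤ k → k < i + 4 →
      ((k < c ∧ c < m + t ∧ ∃ e, c - k = t * e) ↔
        ¬ (k + r < c ∧ ∃ e, c - (k + q) = t * e)) := by
    intro k hk1 hk2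
    have hkm : k < m := by omega
    have hdm := Nat.div_add_mod (m + t - 1 - k) t
    have hmod := Nat.mod_lt (m + t - 1 - k) (show 0 < t by omega)
    set s : ℕ := (m + t - 1 - k) / t with hs_def
    have hstar1 : m ≤ k + t * s := by omega
    have hstar2 : k + t * s < m + t := by omega
    have hrange : k + t * s < f.length := by omega
    have e1 := chain2 F t c f.length (by omega) hA k (k + t * s) (by omega) hrange
      ⟨s, by omega⟩
    have e2 := hB (k + t * s) hstar1 hstar2
    have e3 := chain2 F t c f.length (by omega) hA (k + q) (k + t * s + q) (by omega)
      (by omega) ⟨s, by omega⟩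
    have e4 := chain2 F t c f.length (by omega) hA (k + q) (k + r) (by omega) (by omega)
      ⟨1, by omega⟩
    have e5 := hFO k hkm
    rw [if_pos (by omega : i ≤ k ∧ k < i + 4)] at e5
    have hle1 : ∀ e, c - k = t * e → k < c → c < m + t → c ≤ k + t * s := by
      intro e he h1 h2
      by_contra hh
      push_neg at hh
      have he' : c = k + t * e := by omega
      have hes : s + 1 ≤ e := by
        by_contra h3
        have h4 : e ≤ s := by omega
        have := Nat.mul_le_mul_left t h4
        omega
      have h5 := Nat.mul_le_mul_left t hes
      have h6 : t * (s+1) = t * s + t := by ring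
      omega
    have hle3 : ∀ e, c - (k + q) = t * e → k + q < c → c ≤ k + t * s + q := by
      intro e he h1
      by_contra hh
      push_neg at hh
      have he' : c = k + q + t * e := by omega
      have hes : s + 1 ≤ e := by
        by_contra h3
        have h4 : e ≤ s := by omega
        have := Nat.mul_le_mul_left t h4
        omega
      have h5 := Nat.mul_le_mul_left t hes
      have h6 : t * (s+1) = t * s + t := by ring
      omega
    by_cases hP : k < c ∧ c < m + t ∧ ∃ e, c - k = t * e
    · by_cases hQ : k + q < c ∧ ∃ e, c - (k + q) = t * e
      · by_cases hR : k + r < c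
        · exfalso
          obtain ⟨e', he'⟩ := hP.2.2
          obtain ⟨e'', he''⟩ := hQ.2
          rw [if_pos ⟨hP.1, hle1 e' he' hP.1 hP.2.1, hP.2.2⟩] at e1
          rw [if_pos ⟨hQ.1, hle3 e'' he'' hQ.1, hQ.2⟩] at e3
          rw [if_neg (fun hh => absurd hh.2.1 (by omega))] at e4
          rw [e1] at e2
          rw [e3] at e2
          rw [e4] at e5
          rw [e5] at e2
          simp at e2
        · exact iff_of_true hP (fun hh => hR hh.1)
      · exact iff_of_true hP (fun hh => hQ ⟨by omega, hh.2⟩)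
    · by_cases hQ : k + q < c ∧ ∃ e, c - (k + q) = t * e
      · by_cases hR : k + r < c
        · exact iff_of_false hP (fun hh => hh ⟨hR, hQ.2⟩)
        · exfalso
          obtain ⟨e'', he''⟩ := hQ.2
          rw [if_neg (fun hh => hP ⟨hh.1, by omega, hh.2.2⟩)] at e1
          rw [if_pos ⟨hQ.1, hle3 e'' he'' hQ.1, hQ.2⟩] at e3
          rw [if_pos ⟨hQ.1, by omega, hQ.2⟩] at e4
          rw [e4] at e5
          rw [e1] at e2
          rw [e3] at e2
          rw [e5] at e2
          simp at e2
      · exfalso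
        rw [if_neg (fun hh => hP ⟨hh.1, by omega, hh.2.2⟩)] at e1
        rw [if_neg (fun hh => hQ ⟨hh.1, hh.2.2⟩)] at e3
        rw [if_neg (fun hh => hQ ⟨hh.1, hh.2.2⟩)] at e4
        rw [e1] at e2
        rw [e3] at e2
        rw [e4, e2] at e5
        rcases Bool.eq_false_or_eq_true (F k) with h | h <;> rw [h] at e5 <;> simp at e5
  -- arithmetic endgame
  clear hA hB hpt hU hW1 hW2 heq hFX1 hFX2 hFO hX1 hX2 hO hwlen htr hcw hulen hdroplen
  clear hF_def hw_def
  clear_value t q c F w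
  rcases Nat.lt_or_ge t 3 with ht23 | ht3
  · -- t = 2
    have ht2' : t = 2 := by omega
    rcases Nat.even_or_odd q with ⟨qq, hqe⟩ | ⟨qq, hqe⟩
    · by_cases hδp : δ % 2 = 0
      · have hM := hmaster (i+1) (by omega) (by omega)
        have hnA : ¬ ((i+1) < c ∧ c < m + t ∧ ∃ e, c - (i+1) = t * e) := by
          clear hM
          rintro ⟨h1, h2, e, he⟩
          rw [ht2'] at he
          omega
        have hnB : ¬ ((i+1) + r < c ∧ ∃ e, c - ((i+1) + q) = t * e) := by
          clear hnA hM
          rintro ⟨h1, e, he⟩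
          rw [ht2'] at he
          omega
        exact hnA (hM.mpr hnB)
      · have hM := hmaster i (by omega) (by omega)
        have hnA : ¬ (i < c ∧ c < m + t ∧ ∃ e, c - i = t * e) := by
          clear hM
          rintro ⟨h1, h2, e, he⟩
          rw [ht2'] at he
          omega
        have hnB : ¬ (i + r < c ∧ ∃ e, c - (i + q) = t * e) := by
          clear hnA hM
          rintro ⟨h1, e, he⟩
          rw [ht2'] at he
          omega
        exact hnA (hM.mpr hnB)
    · have hM := hmaster (i+δ) (by omega) (by omega)
      have hnA : ¬ ((i+δ) < c ∧ c < m + t ∧ ∃ e, c - (i+δ) = t * e) := by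
        clear hM
        rintro ⟨h1, h2, e, he⟩
        rw [ht2'] at he
        omega
      have hnB : ¬ ((i+δ) + r < c ∧ ∃ e, c - ((i+δ) + q) = t * e) := by
        clear hnA hM
        rintro ⟨h1, -⟩
        omega
      exact hnA (hM.mpr hnB)
  · -- t ≥ 3
    have hM1 := hmaster (i+1) (by omega) (by omega)
    have hM2 := hmaster (i+2) (by omega) (by omega)
    have hnB1 : ¬ ((i+1) + r < c ∧ ∃ e, c - ((i+1) + q) = t * e) := by
      clear hM1 hM2
      rintro ⟨h1, e, he⟩
      match e with
      | 0 => omega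
      | 1 => omega
      | (e+2) =>
        have hee : t * (e+2) = t * e + 2 * t := by ring
        omega
    have hnB2 : ¬ ((i+2) + r < c ∧ ∃ e, c - ((i+2) + q) = t * e) := by
      clear hM1 hM2 hnB1
      rintro ⟨h1, e, he⟩
      match e with
      | 0 => omega
      | 1 => omega
      | (e+2) =>
        have hee : t * (e+2) = t * e + 2 * t := by ring
        omega
    have hA1 : (i+1) < c ∧ c < m + t ∧ ∃ e, c - (i+1) = t * e := hM1.mpr hnB1
    have hA2 : (i+2) < c ∧ c < m + t ∧ ∃ e, c - (i+2) = t * e := hM2.mpr hnB2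
    obtain ⟨-, -, e1', he1⟩ := hA1
    obtain ⟨h2lt, -, e2', he2⟩ := hA2
    have hd1 : t ∣ (c - (i+1)) := ⟨e1', he1⟩
    have hd2 : t ∣ (c - (i+2)) := ⟨e2', he2⟩
    have hd3 := Nat.dvd_sub hd1 hd2
    have h31 : c - (i+1) - (c - (i+2)) = 1 := by omega
    rw [h31] at hd3
    have := Nat.le_of_dvd one_pos hd3
    omega

end LS

lemma bool_ne {a b : Bool} (h : a ≠ b) : b = !a := by
  cases a <;> cases b <;> simp_all

theorem stmt14 (f : List Bool) (n r i : ℕ) (hn : n = f.length) (hr1 : 1 ≤ r) (hr : r < n)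
    (htrans : Transforms [TOp.S i, TOp.S (i+2)] (f.take (n - r)) (f.drop r))
    (hdist2 : tdist (f.take (n - r)) (f.drop r) = 2) :
    ¬ TildeIsometric f := by
  intro hIso
  obtain ⟨⟨hv1, hv2, -⟩, happ⟩ := htrans
  have hmlen : (f.take (n - r)).length = n - r := by
    rw [List.length_take]; omega
  obtain ⟨hi1, hne1⟩ := hv1
  rw [hmlen] at hi1
  obtain ⟨hi3, hne2⟩ := hv2
  rw [length_apply, hmlen] at hi3
  have hp : ∀ k, k < n - r → (f.take (n-r)).getD k false = f.getD k false :=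
    fun k hk => getD_take' f (n-r) k hk
  rw [hp i (by omega), hp (i+1) (by omega)] at hne1
  have hX1 : f.getD (i+1) false = !(f.getD i false) := bool_ne hne1
  have hyfull : ∀ z, z < n - r → ((TOp.S i).apply (f.take (n-r))).getD z false =
      if z = i then f.getD (i+1) false else if z = i+1 then f.getD i false
      else f.getD z false := by
    intro z hz
    rw [getD_S i _ z (by rw [hmlen]; omega)]
    by_cases h1 : z = i
    · rw [if_pos h1, if_pos h1, hp (i+1) (by omega)]
    · rw [if_neg h1, if_neg h1]
      by_cases h2 : z = i+1
      · rw [if_pos h2, if_pos h2, hp i (by omega)]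
      · rw [if_neg h2, if_neg h2, hp z hz]
  rw [hyfull (i+2) (by omega), hyfull (i+3) (by omega),
    if_neg (by omega : ¬ i+2 = i), if_neg (by omega : ¬ i+2 = i+1),
    if_neg (by omega : ¬ i+3 = i), if_neg (by omega : ¬ i+3 = i+1)] at hne2
  have hX2 : f.getD (i+3) false = !(f.getD (i+2) false) := bool_ne hne2
  simp only [applySeq] at happ
  have hylen : i + 2 + 1 < ((TOp.S i).apply (f.take (n-r))).length := by
    rw [length_apply, hmlen]; omega
  have hzfull : ∀ k, k < n - r →
      ((TOp.S (i+2)).apply ((TOp.S i).apply (f.take (n-r)))).getD k false =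
      if k = i then f.getD (i+1) false else if k = i+1 then f.getD i false
      else if k = i+2 then f.getD (i+3) false else if k = i+3 then f.getD (i+2) false
      else f.getD k false := by
    intro k hk
    rw [getD_S (i+2) _ k hylen]
    by_cases h2 : k = i+2
    · have hidx : i+2+1 = i+3 := rfl
      rw [if_pos h2, hidx, hyfull (i+3) (by omega), if_neg (by omega : ¬ i+3 = i),
        if_neg (by omega : ¬ i+3 = i+1), if_neg (by omega : ¬ k = i),
        if_neg (by omega : ¬ k = i+1), if_pos h2]
    · rw [if_neg h2]
      by_cases h3 : k = i+3
      · rw [if_pos h3, hyfull (i+2) (by omega), if_neg (by omega : ¬ i+2 = i),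
          if_neg (by omega : ¬ i+2 = i+1), if_neg (by omega : ¬ k = i),
          if_neg (by omega : ¬ k = i+1), if_neg h2, if_pos h3]
      · rw [if_neg h3, hyfull k hk]
        by_cases h0 : k = i
        · rw [if_pos h0, if_pos h0]
        · rw [if_neg h0, if_neg h0]
          by_cases hh1 : k = i+1
          · rw [if_pos hh1, if_pos hh1]
          · rw [if_neg hh1, if_neg hh1, if_neg h2, if_neg h3]
  have hO : ∀ k, k < n - r → f.getD (k + r) false =
      if i ≤ k ∧ k < i + 4 then !(f.getD k false) else f.getD k false := by
    intro k hk
    have h1 : ((TOp.S (i+2)).apply ((TOp.S i).apply (f.take (n-r)))).getD k false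
        = (f.drop r).getD k false := by rw [happ]
    rw [getD_drop', hzfull k hk] at h1
    have hidx : r + k = k + r := by omega
    rw [hidx] at h1
    rw [← h1]
    by_cases h0 : k = i
    · subst h0
      rw [if_pos rfl, if_pos (by omega), hX1]
    · by_cases hh1 : k = i+1
      · subst hh1
        rw [if_neg (by omega : ¬ i+1 = i), if_pos rfl, if_pos (by omega), hX1]
        simp
      · by_cases h2 : k = i+2
        · subst h2
          rw [if_neg (by omega : ¬ i+2 = i), if_neg (by omega : ¬ i+2 = i+1), if_pos rfl,
            if_pos (by omega), hX2]
        · by_cases h3 : k = i+3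
          · subst h3
            rw [if_neg (by omega : ¬ i+3 = i), if_neg (by omega : ¬ i+3 = i+1),
              if_neg (by omega : ¬ i+3 = i+2), if_pos rfl, if_pos (by omega), hX2]
            simp
          · rw [if_neg h0, if_neg hh1, if_neg h2, if_neg h3,
              if_neg (by omega : ¬ (i ≤ k ∧ k < i + 4))]
  -- the base word
  have hdlen : (f.drop (n-r)).length = r := by rw [List.length_drop]; omega
  have hwlen : (f ++ f.drop (n-r)).length = f.length + r := by
    rw [List.length_append, hdlen]
  have hW1 : ∀ z, z < f.length → (f ++ f.drop (n-r)).getD z false = f.getD z false := by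
    intro z hz
    rw [getD_append', if_pos hz]
  have hW2 : ∀ z, f.length ≤ z → z < f.length + r →
      (f ++ f.drop (n-r)).getD z false = f.getD (z - r) false := by
    intro z hz1 hz2
    rw [getD_append', if_neg (by omega), getD_drop']
    have : n - r + (z - f.length) = z - r := by omega
    rw [this]
  have hval : ∀ δ', δ' < 4 →
      (f ++ f.drop (n-r)).getD (r+i+δ') false = !(f.getD (i+δ') false) := by
    intro δ' hδ'
    rw [hW1 _ (by omega)]
    have hidx : r+i+δ' = (i+δ') + r := by omega
    rw [hidx, hO (i+δ') (by omega), if_pos (by omega)]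
  have hv0 : (f ++ f.drop (n-r)).getD (r+i) false = !(f.getD i false) := by
    have := hval 0 (by omega)
    simpa using this
  have hv1' : (f ++ f.drop (n-r)).getD (r+i+1) false = !(f.getD (i+1) false) :=
    hval 1 (by omega)
  have hv2' : (f ++ f.drop (n-r)).getD (r+i+2) false = !(f.getD (i+2) false) :=
    hval 2 (by omega)
  have hv3' : (f ++ f.drop (n-r)).getD (r+i+3) false = !(f.getD (i+3) false) :=
    hval 3 (by omega)
  have h01 : (f ++ f.drop (n-r)).getD (r+i) false
      = !((f ++ f.drop (n-r)).getD (r+i+1) false) := by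
    rw [hv0, hv1', hX1]
    simp
  have h23 : (f ++ f.drop (n-r)).getD (r+i+2) false
      = !((f ++ f.drop (n-r)).getD (r+i+3) false) := by
    rw [hv2', hv3', hX2]
    simp
  have hwf : f <:+: (f ++ f.drop (n-r)) := ⟨[], f.drop (n-r), by simp⟩
  -- the double-swap word equals take r ++ f
  have hxv : ∀ z, ((TOp.S (r+i)).apply (f ++ f.drop (n-r))).getD z false =
      if z = r+i then (f ++ f.drop (n-r)).getD (r+i+1) false
      else if z = r+i+1 then (f ++ f.drop (n-r)).getD (r+i) false
      else (f ++ f.drop (n-r)).getD z false :=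
    fun z => getD_S _ _ z (by rw [hwlen]; omega)
  have hLHS : ∀ k, ((TOp.S (r+i+2)).apply ((TOp.S (r+i)).apply (f ++ f.drop (n-r)))).getD k false =
      if k = r+i then (f ++ f.drop (n-r)).getD (r+i+1) false
      else if k = r+i+1 then (f ++ f.drop (n-r)).getD (r+i) false
      else if k = r+i+2 then (f ++ f.drop (n-r)).getD (r+i+3) false
      else if k = r+i+3 then (f ++ f.drop (n-r)).getD (r+i+2) false
      else (f ++ f.drop (n-r)).getD k false := by
    intro k
    rw [getD_S _ _ k (by rw [length_apply, hwlen]; omega)]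
    have hidx : r+i+2+1 = r+i+3 := rfl
    by_cases h2 : k = r+i+2
    · rw [if_pos h2, hidx, hxv (r+i+3), if_neg (by omega : ¬ r+i+3 = r+i),
        if_neg (by omega : ¬ r+i+3 = r+i+1), if_neg (by omega : ¬ k = r+i),
        if_neg (by omega : ¬ k = r+i+1), if_pos h2]
    · rw [if_neg h2]
      by_cases h3 : k = r+i+3
      · rw [hidx, if_pos h3, hxv (r+i+2), if_neg (by omega : ¬ r+i+2 = r+i),
          if_neg (by omega : ¬ r+i+2 = r+i+1), if_neg (by omega : ¬ k = r+i),
          if_neg (by omega : ¬ k = r+i+1), if_neg h2, if_pos h3]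
      · rw [hidx, if_neg h3, hxv k]
        simp only [if_neg h2, if_neg h3]
  have htake : (f.take r).length = r := by rw [List.length_take]; omega
  have hu'eq : (TOp.S (r+i+2)).apply ((TOp.S (r+i)).apply (f ++ f.drop (n-r)))
      = f.take r ++ f := by
    apply eq_of_getD
    · rw [length_apply, length_apply, hwlen, List.length_append, List.length_take]
      omega
    · intro k hk
      rw [length_apply, length_apply, hwlen] at hk
      have hrhs : (f.take r ++ f).getD k false =
          if k < r then f.getD k false else f.getD (k - r) false := by
        rw [getD_append', htake]
        by_cases hkr : k < r
        · rw [if_pos hkr, if_pos hkr, getD_take' f r k hkr]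
        · rw [if_neg hkr, if_neg hkr]
      rw [hLHS k, hrhs]
      by_cases hkr : k < r
      · rw [if_pos hkr, if_neg (by omega : ¬ k = r+i),
          if_neg (by omega : ¬ k = r+i+1), if_neg (by omega : ¬ k = r+i+2),
          if_neg (by omega : ¬ k = r+i+3), hW1 k (by omega)]
      · rw [if_neg hkr]
        by_cases h0 : k = r+i
        · subst h0
          rw [if_pos rfl, hv1', hX1]
          have : r + i - r = i := by omega
          rw [this]
          simp
        · by_cases hh1 : k = r+i+1
          · subst hh1
            rw [if_neg (by omega : ¬ r+i+1 = r+i), if_pos rfl, hv0]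
            have : r + i + 1 - r = i + 1 := by omega
            rw [this, hX1]
          · by_cases h2 : k = r+i+2
            · subst h2
              rw [if_neg (by omega : ¬ r+i+2 = r+i), if_neg (by omega : ¬ r+i+2 = r+i+1),
                if_pos rfl, hv3', hX2]
              have : r + i + 2 - r = i + 2 := by omega
              rw [this]
              simp
            · by_cases h3 : k = r+i+3
              · subst h3
                rw [if_neg (by omega : ¬ r+i+3 = r+i), if_neg (by omega : ¬ r+i+3 = r+i+1),
                  if_neg (by omega : ¬ r+i+3 = r+i+2), if_pos rfl, hv2']
                have : r + i + 3 - r = i + 3 := by omega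
                rw [this, hX2]
              · rw [if_neg h0, if_neg hh1, if_neg h2, if_neg h3]
                by_cases hkn : k < f.length
                · rw [hW1 k hkn]
                  have hkm : k - r < n - r := by omega
                  have hidx2 : (k - r) + r = k := by omega
                  have := hO (k - r) hkm
                  rw [hidx2, if_neg (by omega : ¬ (i ≤ k - r ∧ k - r < i + 4))] at this
                  rw [this]
                · rw [hW2 k (by omega) (by omega)]
  have hw2f : f <:+: (TOp.S (r+i+2)).apply ((TOp.S (r+i)).apply (f ++ f.drop (n-r))) := by
    rw [hu'eq]
    exact ⟨f.take r, [], by simp⟩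
  have hLS : ∀ δ', δ' ≤ 3 → FFree f ((TOp.R (r+i+δ')).apply (f ++ f.drop (n-r))) :=
    fun δ' h => LS f r i δ' (n-r) h (by omega) hr1 (by omega) hX1 hX2 hO
  have hL0 : FFree f ((TOp.R (r+i)).apply (f ++ f.drop (n-r))) := by
    have := hLS 0 (by omega)
    simpa using this
  have hflen : f.length < (f ++ f.drop (n-r)).length := by rw [hwlen]; omega
  by_cases hx : f <:+: (TOp.S (r+i)).apply (f ++ f.drop (n-r))
  · exact caseR f (f ++ f.drop (n-r)) (r+i) (by rw [hwlen]; omega) hflen h01 hwf hx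
      hL0 (hLS 1 (by omega)) hIso
  · by_cases hy : f <:+: (TOp.S (r+i+2)).apply (f ++ f.drop (n-r))
    · exact caseR f (f ++ f.drop (n-r)) (r+i+2) (by rw [hwlen]; omega) hflen h23 hwf hy
        (hLS 2 (by omega)) (hLS 3 (by omega)) hIso
    · exact caseS f (f ++ f.drop (n-r)) (r+i) (by rw [hwlen]; omega) hflen h01 h23 hwf
        hw2f hx hy hIso
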